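/- arXiv:2301.11388 — 3 statements merged into one kernel-verified Lean document; each statement's English description precedes it below -/
import Mathlib

section
/- Let V : ℝ → ℂ, let ζ₀ ∈ ℂ with ζ₀ ≠ 0, and let θ : [0,∞) × ℂ → ℂ be such that for every ζ in a neighbourhood of ζ₀ the function x ↦ θ(x,ζ) is twice differentiable and satisfies −∂ₓ²θ(x,ζ) + V(x)·θ(x,ζ) = ζ²·θ(x,ζ) for all x ≥ 0. Let G : [0,∞) → ℂ be twice differentiable with −G''(x) + V(x)·G(x) = ζ₀²·G(x) + 2ζ₀·θ(x,ζ₀), and assume the boundary maps ζ ↦ θ(0,ζ) and ζ ↦ ∂ₓθ(0,ζ) are differentiable at ζ₀ with derivatives G(0) and G'(0) respectively. Assume θ(0,ζ₀) ≠ 0, that ∂ₓθ(x,ζ₀)·G(x) − θ(x,ζ₀)·G'(x) → 0 as x → ∞, and that x ↦ θ(x,ζ₀)² is integrable on [0,∞). Then ∫₀^∞ θ(x,ζ₀)² dx = (θ(0,ζ₀)² / (2ζ₀)) · (d/dζ)|_{ζ=ζ₀} [ ∂ₓθ(0,ζ) / θ(0,ζ) ]. -/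
open Complex MeasureTheory Filter

/-- If `θ(·,ζ)` is a family of solutions of `-u'' + V u = ζ² u` on `[0,∞)` for `ζ` near `ζ₀`,
`G` is the ζ-derivative of `θ` at `ζ₀` (satisfying the ζ-differentiated equation and matching
the ζ-derivatives of the boundary data), `θ(0,ζ₀) ≠ 0`, the modified Wronskian vanishes at
infinity and `θ(·,ζ₀)²` is integrable, then
`∫₀^∞ θ(x,ζ₀)² dx = (θ(0,ζ₀)²/(2ζ₀)) · (d/dζ)[θₓ(0,ζ)/θ(0,ζ)]|_{ζ=ζ₀}`. -/
theorem stmt_2 (V : ℝ → ℂ) (ζ₀ : ℂ) (hζ₀ : ζ₀ ≠ 0)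
    (θ θx θxx : ℝ → ℂ → ℂ) (G G' G'' : ℝ → ℂ) (U : Set ℂ)
    (hU : U ∈ nhds ζ₀)
    (hθ : ∀ ζ ∈ U, ∀ x : ℝ, 0 ≤ x → HasDerivAt (fun y => θ y ζ) (θx x ζ) x)
    (hθx : ∀ ζ ∈ U, ∀ x : ℝ, 0 ≤ x → HasDerivAt (fun y => θx y ζ) (θxx x ζ) x)
    (heqθ : ∀ ζ ∈ U, ∀ x : ℝ, 0 ≤ x → -θxx x ζ + V x * θ x ζ = ζ ^ 2 * θ x ζ)
    (hG : ∀ x : ℝ, 0 ≤ x → HasDerivAt G (G' x) x)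
    (hG' : ∀ x : ℝ, 0 ≤ x → HasDerivAt G' (G'' x) x)
    (heqG : ∀ x : ℝ, 0 ≤ x →
      -G'' x + V x * G x = ζ₀ ^ 2 * G x + 2 * ζ₀ * θ x ζ₀)
    (hbd0 : HasDerivAt (fun ζ => θ 0 ζ) (G 0) ζ₀)
    (hbd1 : HasDerivAt (fun ζ => θx 0 ζ) (G' 0) ζ₀)
    (hθ0 : θ 0 ζ₀ ≠ 0)
    (hlim : Tendsto (fun x : ℝ => θx x ζ₀ * G x - θ x ζ₀ * G' x) atTop (nhds 0))
    (hint : IntegrableOn (fun x : ℝ => θ x ζ₀ ^ 2) (Set.Ici 0)) :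
    ∫ x in Set.Ioi (0 : ℝ), θ x ζ₀ ^ 2 =
      θ 0 ζ₀ ^ 2 / (2 * ζ₀) * deriv (fun ζ => θx 0 ζ / θ 0 ζ) ζ₀ := by

  have hζ₀U : ζ₀ ∈ U := mem_of_mem_nhds hU
  set F : ℝ → ℂ := fun x => θx x ζ₀ * G x - θ x ζ₀ * G' x with hF
  have hFderiv : ∀ x : ℝ, 0 ≤ x → HasDerivAt F (2 * ζ₀ * θ x ζ₀ ^ 2) x := by
    intro x hx
    have h1 := ((hθx ζ₀ hζ₀U x hx).mul (hG x hx)).sub ((hθ ζ₀ hζ₀U x hx).mul (hG' x hx))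
    have e1 : θxx x ζ₀ = V x * θ x ζ₀ - ζ₀ ^ 2 * θ x ζ₀ := by
      have := heqθ ζ₀ hζ₀U x hx; linear_combination -this
    have e2 : G'' x = V x * G x - ζ₀ ^ 2 * G x - 2 * ζ₀ * θ x ζ₀ := by
      have := heqG x hx; linear_combination -this
    refine h1.congr_deriv ?_
    rw [e1, e2]; ring
  have hIccInt : ∀ A : ℝ, 0 ≤ A → IntervalIntegrable (fun x => 2 * ζ₀ * θ x ζ₀ ^ 2) volume 0 A := by
    intro A hA
    rw [intervalIntegrable_iff_integrableOn_Ioc_of_le hA]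
    exact ((hint.mono_set fun x hx => hx.1.le).const_mul _)
  have hFTC : ∀ A : ℝ, 0 ≤ A → ∫ x in (0:ℝ)..A, 2 * ζ₀ * θ x ζ₀ ^ 2 = F A - F 0 := by
    intro A hA
    apply intervalIntegral.integral_eq_sub_of_hasDerivAt
    · intro x hx
      rw [Set.uIcc_of_le hA] at hx
      exact hFderiv x hx.1
    · exact hIccInt A hA
  have hintc : IntegrableOn (fun x : ℝ => 2 * ζ₀ * θ x ζ₀ ^ 2) (Set.Ioi 0) :=
    (hint.mono_set Set.Ioi_subset_Ici_self).const_mul _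
  have htend : Tendsto (fun A : ℝ => ∫ x in (0:ℝ)..A, 2 * ζ₀ * θ x ζ₀ ^ 2) atTop
      (nhds (∫ x in Set.Ioi (0:ℝ), 2 * ζ₀ * θ x ζ₀ ^ 2)) :=
    MeasureTheory.intervalIntegral_tendsto_integral_Ioi 0 hintc tendsto_id
  have htend2 : Tendsto (fun A : ℝ => ∫ x in (0:ℝ)..A, 2 * ζ₀ * θ x ζ₀ ^ 2) atTop
      (nhds (0 - F 0)) := by
    have : Tendsto (fun A : ℝ => F A - F 0) atTop (nhds (0 - F 0)) :=
      hlim.sub_const (F 0)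
    refine this.congr' ?_
    filter_upwards [eventually_ge_atTop (0:ℝ)] with A hA
    exact (hFTC A hA).symm
  have hkey : ∫ x in Set.Ioi (0:ℝ), 2 * ζ₀ * θ x ζ₀ ^ 2 = -F 0 := by
    have := tendsto_nhds_unique htend htend2
    rw [this]; ring
  have hkey2 : 2 * ζ₀ * ∫ x in Set.Ioi (0:ℝ), θ x ζ₀ ^ 2 = -F 0 := by
    rw [← hkey, MeasureTheory.integral_const_mul]
  have hd : HasDerivAt (fun ζ => θx 0 ζ / θ 0 ζ)
      ((G' 0 * θ 0 ζ₀ - θx 0 ζ₀ * G 0) / θ 0 ζ₀ ^ 2) ζ₀ := hbd1.div hbd0 hθ0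
  rw [hd.deriv]
  have h2ζ : (2 : ℂ) * ζ₀ ≠ 0 := by
    simp [hζ₀]
  have : ∫ x in Set.Ioi (0:ℝ), θ x ζ₀ ^ 2 = -F 0 / (2 * ζ₀) := by
    field_simp at hkey2 ⊢
    linear_combination hkey2
  rw [this, hF]
  field_simp
  ring
end

section
/- Let a, b, c, d, φ ∈ ℝ with ad − bc = −1, and let w₁, w₂, p₁, p₂ ∈ ℂ with w₁ ≠ 0 and w₂ ≠ 0. Set L := a·p₁/w₁ − d·p₂/w₂ + b·p₁p₂/(w₁w₂) − c and assume L ≠ 0. Then the system of four linear equations in the unknowns λ₁₁, λ₁₂, λ₂₁, λ₂₂ ∈ ℂ: (i) w₁·λ₁₂ = e^{iφ}·(a·w₂·λ₂₂ + b·(1/w₂ + p₂·λ₂₂)); (ii) w₁·λ₁₁ = e^{iφ}·(a·w₂ + b·p₂)·λ₂₁; (iii) p₁·λ₁₂ = e^{iφ}·(c·w₂·λ₂₂ + d·(1/w₂ + p₂·λ₂₂)); (iv) 1/w₁ + p₁·λ₁₁ = e^{iφ}·(c·w₂ + d·p₂)·λ₂₁; has a unique solution, namely λ₁₁ = −(a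 + b·p₂/w₂)/(L·w₁²), λ₁₂ = −e^{iφ}/(L·w₁·w₂), λ₂₁ = −e^{−iφ}/(L·w₁·w₂), λ₂₂ = −(b·p₁/w₁ − d)/(L·w₂²). -/
open Complex

/-- The algebraic core of the Kreĭn resolvent formula: the four linear equations coming
from the generalized point interaction conditions determine the coefficients `λ_{j,l}`
uniquely, with the stated explicit values. -/
theorem stmt_4 (a b c d φ : ℝ) (hdet : a * d - b * c = -1)
    (w₁ w₂ p₁ p₂ : ℂ) (hw₁ : w₁ ≠ 0) (hw₂ : w₂ ≠ 0)
    (L : ℂ)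
    (hL : L = (a : ℂ) * p₁ / w₁ - (d : ℂ) * p₂ / w₂ + (b : ℂ) * p₁ * p₂ / (w₁ * w₂) - c)
    (hLne : L ≠ 0) :
    ∀ l₁₁ l₁₂ l₂₁ l₂₂ : ℂ,
      (w₁ * l₁₂ = Complex.exp (φ * I) * ((a : ℂ) * w₂ * l₂₂ + (b : ℂ) * (1 / w₂ + p₂ * l₂₂)) ∧
       w₁ * l₁₁ = Complex.exp (φ * I) * ((a : ℂ) * w₂ + (b : ℂ) * p₂) * l₂₁ ∧
       p₁ * l₁₂ = Complex.exp (φ * I) * ((c : ℂ) * w₂ * l₂₂ + (d : ℂ) * (1 / w₂ + p₂ * l₂₂)) ∧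
       1 / w₁ + p₁ * l₁₁ = Complex.exp (φ * I) * ((c : ℂ) * w₂ + (d : ℂ) * p₂) * l₂₁)
      ↔
      (l₁₁ = -((a : ℂ) + (b : ℂ) * p₂ / w₂) / (L * w₁ ^ 2) ∧
       l₁₂ = -Complex.exp (φ * I) / (L * w₁ * w₂) ∧
       l₂₁ = -Complex.exp (-(φ : ℂ) * I) / (L * w₁ * w₂) ∧
       l₂₂ = -((b : ℂ) * p₁ / w₁ - d) / (L * w₂ ^ 2)) := by
  have hdetC : (a : ℂ) * d - (b : ℂ) * c = -1 := by exact_mod_cast hdet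
  set E := Complex.exp ((φ : ℂ) * I) with hE
  have hEne : E ≠ 0 := Complex.exp_ne_zero _
  have hEinv : Complex.exp (-(φ : ℂ) * I) = E⁻¹ := by
    rw [hE, ← Complex.exp_neg]; ring_nf
  have hkey : L * w₁ * w₂ = (a : ℂ) * p₁ * w₂ - (d : ℂ) * p₂ * w₁ + (b : ℂ) * p₁ * p₂
      - (c : ℂ) * w₁ * w₂ := by
    rw [hL]; field_simp
  have hLw : L * w₁ * w₂ ≠ 0 := mul_ne_zero (mul_ne_zero hLne hw₁) hw₂
  intro l₁₁ l₁₂ l₂₁ l₂₂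
  constructor
  · rintro ⟨h1, h2, h3, h4⟩
    have h1' : w₁ * l₁₂ * w₂ = E * ((a : ℂ) * w₂ * l₂₂ * w₂ + (b : ℂ) * (1 + p₂ * l₂₂ * w₂)) := by
      field_simp at h1; linear_combination h1
    have h3' : p₁ * l₁₂ * w₂ = E * ((c : ℂ) * w₂ * l₂₂ * w₂ + (d : ℂ) * (1 + p₂ * l₂₂ * w₂)) := by
      field_simp at h3; linear_combination h3
    have h4' : 1 + p₁ * l₁₁ * w₁ = E * ((c : ℂ) * w₂ + (d : ℂ) * p₂) * l₂₁ * w₁ := by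
      field_simp at h4; linear_combination h4
    have e21 : l₂₁ * (L * w₁ * w₂) = -E⁻¹ := by
      have h : E * (l₂₁ * (L * w₁ * w₂)) = E * -E⁻¹ := by
        rw [mul_neg, Complex.mul_inv_cancel hEne]
        linear_combination h4' - p₁ * h2 + (E * l₂₁) * hkey
      exact mul_left_cancel₀ hEne h
    have e12 : l₁₂ * (L * w₁ * w₂) = -E := by
      have h : l₁₂ * (L * w₁ * w₂) * w₂ = -E * w₂ := by
        linear_combination ((a : ℂ) * w₂ + (b : ℂ) * p₂) * h3'
          - ((c : ℂ) * w₂ + (d : ℂ) * p₂) * h1' + (l₁₂ * w₂) * hkey + (E * w₂) * hdetC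
      exact mul_right_cancel₀ hw₂ h
    have e22 : l₂₂ * (L * w₁ * w₂) * w₂ = -((b : ℂ) * p₁ - (d : ℂ) * w₁) := by
      have h : E * (l₂₂ * (L * w₁ * w₂) * w₂) = E * -((b : ℂ) * p₁ - (d : ℂ) * w₁) := by
        linear_combination w₁ * h3' - p₁ * h1' + (E * l₂₂ * w₂) * hkey
      exact mul_left_cancel₀ hEne h
    have e11 : l₁₁ * (L * w₁ * w₂) * w₁ = -((a : ℂ) * w₂ + (b : ℂ) * p₂) := by
      linear_combination ((a : ℂ) * w₂ + (b : ℂ) * p₂) * h4'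
        - ((c : ℂ) * w₂ + (d : ℂ) * p₂) * w₁ * h2 + (w₁ * l₁₁) * hkey
    refine ⟨?_, ?_, ?_, ?_⟩
    · rw [eq_div_iff (mul_ne_zero hLne (pow_ne_zero 2 hw₁))]
      field_simp
      linear_combination e11
    · rw [eq_div_iff hLw]; linear_combination e12
    · rw [hEinv, eq_div_iff hLw]; linear_combination e21
    · rw [eq_div_iff (mul_ne_zero hLne (pow_ne_zero 2 hw₂))]
      field_simp
      linear_combination e22
  · rintro ⟨h11, h12, h21, h22⟩
    have hW1 : w₁ * (1 / w₁) = 1 := by field_simp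
    have hW2 : w₂ * (1 / w₂) = 1 := by field_simp
    have f11 : l₁₁ * (L * w₁ ^ 2 * w₂) = -((a : ℂ) * w₂ + (b : ℂ) * p₂) := by
      rw [h11]; field_simp
    have f12 : l₁₂ * (L * w₁ * w₂) = -E := by
      rw [h12]; field_simp
    have f21 : E * (l₂₁ * (L * w₁ * w₂)) = -1 := by
      rw [h21, hEinv]; field_simp
    have f22 : l₂₂ * (L * w₂ ^ 2 * w₁) = -((b : ℂ) * p₁ - (d : ℂ) * w₁) := by
      rw [h22]; field_simp
    refine ⟨?_, ?_, ?_, ?_⟩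
    · have h : (L * w₁ * w₂ * w₂) * (w₁ * l₁₂)
          = (L * w₁ * w₂ * w₂) * (E * ((a : ℂ) * w₂ * l₂₂ + (b : ℂ) * (1 / w₂ + p₂ * l₂₂))) := by
        linear_combination (w₁ * w₂) * f12 - (E * a * w₂) * f22 - (E * (b : ℂ) * p₂) * f22
          - (E * (b : ℂ) * L * w₁ * w₂) * hW2 - (E * (b : ℂ)) * hkey - (E * w₁ * w₂) * hdetC
      exact mul_left_cancel₀ (mul_ne_zero hLw hw₂) h
    · have h : (L * w₁ * w₂) * (w₁ * l₁₁)
          = (L * w₁ * w₂) * (E * ((a : ℂ) * w₂ + (b : ℂ) * p₂) * l₂₁) := by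
        linear_combination f11 - ((a : ℂ) * w₂ + (b : ℂ) * p₂) * f21
      exact mul_left_cancel₀ hLw h
    · have h : (L * w₁ * w₂ * w₂) * (p₁ * l₁₂)
          = (L * w₁ * w₂ * w₂) * (E * ((c : ℂ) * w₂ * l₂₂ + (d : ℂ) * (1 / w₂ + p₂ * l₂₂))) := by
        linear_combination (p₁ * w₂) * f12 - (E * (c : ℂ) * w₂) * f22 - (E * (d : ℂ) * p₂) * f22
          - (E * (d : ℂ) * L * w₁ * w₂) * hW2 - (E * (d : ℂ)) * hkey - (E * w₂ * p₁) * hdetC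
      exact mul_left_cancel₀ (mul_ne_zero hLw hw₂) h
    · have h : (L * w₁ * w₂ * w₁) * (1 / w₁ + p₁ * l₁₁)
          = (L * w₁ * w₂ * w₁) * (E * ((c : ℂ) * w₂ + (d : ℂ) * p₂) * l₂₁) := by
        linear_combination (L * w₁ * w₂) * hW1 + hkey + p₁ * f11
          - (w₁ * ((c : ℂ) * w₂ + (d : ℂ) * p₂)) * f21
      exact mul_left_cancel₀ (mul_ne_zero hLw hw₁) h
end

section
/- Let H be a complex inner product space and let f, h ∈ H, and set g = f + h. Then (‖f‖² + ‖g‖²)² − 4·|⟨f, g⟩|² ≤ 6·‖h‖²·‖f‖² + 3·‖h‖⁴. -/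
open Complex

/-- If `g = f + h`, then `(‖f‖² + ‖g‖²)² − 4|⟨f,g⟩|² ≤ 6‖h‖²‖f‖² + 3‖h‖⁴`. -/
theorem stmt_5 {H : Type*} [NormedAddCommGroup H] [InnerProductSpace ℂ H]
    (f h g : H) (hg : g = f + h) :
    (‖f‖ ^ 2 + ‖g‖ ^ 2) ^ 2 - 4 * ‖(inner ℂ f g : ℂ)‖ ^ 2 ≤
      6 * ‖h‖ ^ 2 * ‖f‖ ^ 2 + 3 * ‖h‖ ^ 4 := by
  subst hg
  set a := ‖f‖ with ha
  set s := ‖h‖ with hs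
  set t : ℂ := inner ℂ f h with ht
  have hnorm : ‖f + h‖ ^ 2 = a ^ 2 + 2 * t.re + s ^ 2 := by
    have := @norm_add_sq ℂ H _ _ _ f h
    simpa using this
  have hinner : (inner ℂ f (f + h) : ℂ) = (a ^ 2 : ℂ) + t := by
    rw [inner_add_right, ← ht, @inner_self_eq_norm_sq_to_K ℂ]
    norm_num
    rfl
  have habs : ‖(inner ℂ f (f + h) : ℂ)‖ ^ 2
      = (a ^ 2 + t.re) ^ 2 + t.im ^ 2 := by
    rw [Complex.sq_norm, Complex.normSq_apply, hinner]
    simp [pow_two]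
  have hcs : t.re ^ 2 + t.im ^ 2 ≤ a ^ 2 * s ^ 2 := by
    have h1 : ‖t‖ ≤ a * s := norm_inner_le_norm (𝕜 := ℂ) f h
    have h2 : ‖t‖ ^ 2 ≤ (a * s) ^ 2 := by nlinarith [norm_nonneg t]
    have h3 : Complex.normSq t ≤ (a * s) ^ 2 := by
      rw [← Complex.sq_norm]; exact h2
    rw [Complex.normSq_apply] at h3
    nlinarith [h3]
  have ha0 : 0 ≤ a := norm_nonneg f
  have hs0 : 0 ≤ s := norm_nonneg h
  have htr : t.re ≤ a * s := by
    nlinarith [sq_nonneg t.im, mul_nonneg ha0 hs0, sq_nonneg (a * s - t.re), sq_nonneg (a * s + t.re)]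
  rw [hnorm, habs]
  nlinarith [sq_nonneg t.im, sq_nonneg (a - s), mul_nonneg (mul_nonneg hs0 hs0) (sq_nonneg (a - s)), mul_le_mul_of_nonneg_left htr (mul_nonneg hs0 hs0)]
end
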